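/- Let p be a positive probability vector in R^k, α ∈ (0,1], and let c* be the unique solution of Σ_j max((1−α)p_j, c·p_j^{2/3}) = 1. Then the vector q with q_j = max((1−α)p_j, c*·p_j^{2/3}) is the unique minimizer of S_p(q) = Σ_j p_j/sqrt(q_j) over vectors q in the probability simplex satisfying q_j ≥ (1−α)p_j for all j. -/

import Mathlib

open Finset

lemma tangent_le_uv {P u v : ℝ} (hP : 0 < P) (hu : 0 < u) (hv : 0 < v) :
    P / u + P / (2 * (u * u) * u) * (u * u - v * v) ≤ P / v := by
  have key : P / v - (P / u + P / (2 * (u * u) * u) * (u * u - v * v))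
      = P * (v - u)^2 * (v + 2 * u) / (2 * u^3 * v) := by
    field_simp
    ring
  have hpos : 0 ≤ P * (v - u)^2 * (v + 2 * u) / (2 * u^3 * v) := by positivity
  linarith

lemma tangent_lt_uv {P u v : ℝ} (hP : 0 < P) (hu : 0 < u) (hv : 0 < v) (huv : u ≠ v) :
    P / u + P / (2 * (u * u) * u) * (u * u - v * v) < P / v := by
  have key : P / v - (P / u + P / (2 * (u * u) * u) * (u * u - v * v))
      = P * (v - u)^2 * (v + 2 * u) / (2 * u^3 * v) := by
    field_simp
    ring
  have hne : v - u ≠ 0 := sub_ne_zero.2 (Ne.symm huv)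
  have hpos : 0 < P * (v - u)^2 * (v + 2 * u) / (2 * u^3 * v) := by positivity
  linarith

lemma tangent_le {P a b : ℝ} (hP : 0 < P) (ha : 0 < a) (hb : 0 < b) :
    P / Real.sqrt a + P / (2 * (a * Real.sqrt a)) * (a - b) ≤ P / Real.sqrt b := by
  have ha' : Real.sqrt a * Real.sqrt a = a := Real.mul_self_sqrt ha.le
  have hb' : Real.sqrt b * Real.sqrt b = b := Real.mul_self_sqrt hb.le
  have := tangent_le_uv hP (Real.sqrt_pos.2 ha) (Real.sqrt_pos.2 hb)
  rw [ha', hb'] at this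
  calc P / Real.sqrt a + P / (2 * (a * Real.sqrt a)) * (a - b)
      = P / Real.sqrt a + P / (2 * a * Real.sqrt a) * (a - b) := by ring_nf
    _ ≤ P / Real.sqrt b := this

lemma tangent_lt {P a b : ℝ} (hP : 0 < P) (ha : 0 < a) (hb : 0 < b) (hab : a ≠ b) :
    P / Real.sqrt a + P / (2 * (a * Real.sqrt a)) * (a - b) < P / Real.sqrt b := by
  have ha' : Real.sqrt a * Real.sqrt a = a := Real.mul_self_sqrt ha.le
  have hb' : Real.sqrt b * Real.sqrt b = b := Real.mul_self_sqrt hb.le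
  have huv : Real.sqrt a ≠ Real.sqrt b := by
    intro h
    exact hab (by rw [← ha', ← hb', h])
  have := tangent_lt_uv hP (Real.sqrt_pos.2 ha) (Real.sqrt_pos.2 hb) huv
  rw [ha', hb'] at this
  calc P / Real.sqrt a + P / (2 * (a * Real.sqrt a)) * (a - b)
      = P / Real.sqrt a + P / (2 * a * Real.sqrt a) * (a - b) := by ring_nf
    _ < P / Real.sqrt b := this

lemma cube_sqrt_eq (c x : ℝ) (hc : 0 < c) (hx : 0 < x) :
    (c * x ^ ((2:ℝ)/3)) * Real.sqrt (c * x ^ ((2:ℝ)/3)) = (c * Real.sqrt c) * x := by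
  rw [Real.sqrt_mul hc.le, Real.sqrt_eq_rpow (x ^ ((2:ℝ)/3)), ← Real.rpow_mul hx.le]
  have key : x ^ ((2:ℝ)/3) * x ^ ((2:ℝ)/3 * (1/2)) = x := by
    rw [← Real.rpow_add hx]
    norm_num
  calc c * x ^ ((2:ℝ)/3) * (Real.sqrt c * x ^ ((2:ℝ)/3 * (1/2)))
      = c * Real.sqrt c * (x ^ ((2:ℝ)/3) * x ^ ((2:ℝ)/3 * (1/2))) := by ring
    _ = c * Real.sqrt c * x := by rw [key]

/-- The budgeted optimal allocation: if `c*` solves `∑ j, max((1-α) p j, c* (p j)^(2/3)) = 1`,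
then `q j = max((1-α) p j, c* (p j)^(2/3))` is the unique minimizer of
`S_p(q) = ∑ j, p j / √(q j)` over positive simplex vectors with `q j ≥ (1-α) p j`. -/
theorem budgeted_optimal_allocation {k : ℕ} (p : Fin k → ℝ)
    (hp : ∀ j, 0 < p j) (hpsum : ∑ j, p j = 1) (α : ℝ) (hα0 : 0 < α) (hα1 : α ≤ 1)
    (c : ℝ) (hc0 : 0 ≤ c)
    (hc : ∑ j, max ((1 - α) * p j) (c * (p j) ^ ((2:ℝ)/3)) = 1) :
    let q : Fin k → ℝ := fun j => max ((1 - α) * p j) (c * (p j) ^ ((2:ℝ)/3))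
    (∀ j, 0 < q j) ∧ (∑ j, q j = 1) ∧ (∀ j, (1 - α) * p j ≤ q j) ∧
    (∀ q' : Fin k → ℝ, (∀ j, 0 < q' j) → (∑ j, q' j = 1) →
      (∀ j, (1 - α) * p j ≤ q' j) →
      (∑ j, p j / Real.sqrt (q j)) ≤ ∑ j, p j / Real.sqrt (q' j) ∧
      ((∑ j, p j / Real.sqrt (q' j)) = (∑ j, p j / Real.sqrt (q j)) → q' = q)) := by
  intro q
  -- c is positive
  have hcpos : 0 < c := by
    rcases hc0.lt_or_eq with h | h
    · exact h
    · exfalso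
      have heq : ∀ j ∈ Finset.univ, max ((1 - α) * p j) (c * (p j) ^ ((2:ℝ)/3))
          = (1 - α) * p j := by
        intro j _
        apply max_eq_left
        rw [← h]
        have : 0 ≤ (1 - α) * p j := mul_nonneg (by linarith) (hp j).le
        simpa using this
      rw [Finset.sum_congr rfl heq, ← Finset.mul_sum, hpsum, mul_one] at hc
      linarith
  have hqpos : ∀ j, 0 < q j := fun j =>
    lt_of_lt_of_le (mul_pos hcpos (Real.rpow_pos_of_pos (hp j) _)) (le_max_right _ _)
  have hqlb : ∀ j, (1 - α) * p j ≤ q j := fun j => le_max_left _ _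
  refine ⟨hqpos, hc, hqlb, ?_⟩
  intro q' hq'pos hq'sum hq'lb
  set lam : ℝ := 1 / (2 * (c * Real.sqrt c)) with hlam_def
  -- gradient comparison step
  have hstep : ∀ j, lam * (q j - q' j)
      ≤ (p j / (2 * (q j * Real.sqrt (q j)))) * (q j - q' j) := by
    intro j
    have hcp : 0 < c * (p j) ^ ((2:ℝ)/3) := mul_pos hcpos (Real.rpow_pos_of_pos (hp j) _)
    have hscpos : 0 < Real.sqrt c := Real.sqrt_pos.2 hcpos
    have hpne := (hp j).ne'
    have hcne := hcpos.ne'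
    have hscne := hscpos.ne'
    rcases le_total (c * (p j) ^ ((2:ℝ)/3)) ((1 - α) * p j) with h | h
    · -- constrained coordinate: q j = (1-α) p j, g j ≤ lam, q j - q' j ≤ 0
      have hqj : q j = (1 - α) * p j := max_eq_left h
      have hd : q j - q' j ≤ 0 := by
        have := hq'lb j
        rw [hqj]; linarith
      have hmono : (c * (p j) ^ ((2:ℝ)/3)) * Real.sqrt (c * (p j) ^ ((2:ℝ)/3))
          ≤ q j * Real.sqrt (q j) := by
        have hle : c * (p j) ^ ((2:ℝ)/3) ≤ q j := le_max_right _ _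
        exact mul_le_mul hle (Real.sqrt_le_sqrt hle) (Real.sqrt_nonneg _)
          (hqpos j).le
      rw [cube_sqrt_eq c (p j) hcpos (hp j)] at hmono
      have hg_le : p j / (2 * (q j * Real.sqrt (q j))) ≤ lam := by
        have h1 : p j / (2 * (q j * Real.sqrt (q j)))
            ≤ p j / (2 * ((c * Real.sqrt c) * p j)) := by
          apply div_le_div_of_nonneg_left (hp j).le
          · exact mul_pos two_pos (mul_pos (mul_pos hcpos hscpos) (hp j))
          · nlinarith
        have h2 : p j / (2 * ((c * Real.sqrt c) * p j)) = lam := by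
          rw [hlam_def]
          field_simp
        linarith
      exact mul_le_mul_of_nonpos_right hg_le hd
    · -- unconstrained coordinate: q j = c p^{2/3}, g j = lam
      have hqj : q j = c * (p j) ^ ((2:ℝ)/3) := max_eq_right h
      have hcube : q j * Real.sqrt (q j) = (c * Real.sqrt c) * p j := by
        rw [hqj]; exact cube_sqrt_eq c (p j) hcpos (hp j)
      have hg_eq : p j / (2 * (q j * Real.sqrt (q j))) = lam := by
        rw [hcube, hlam_def]
        field_simp
      rw [hg_eq]
  -- per-coordinate tangent bound
  have key : ∀ j, p j / Real.sqrt (q j) + lam * (q j - q' j) ≤ p j / Real.sqrt (q' j) := by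
    intro j
    have := tangent_le (hp j) (hqpos j) (hq'pos j)
    have := hstep j
    linarith
  have keylt : ∀ j, q' j ≠ q j →
      p j / Real.sqrt (q j) + lam * (q j - q' j) < p j / Real.sqrt (q' j) := by
    intro j hne
    have := tangent_lt (hp j) (hqpos j) (hq'pos j) (Ne.symm hne)
    have := hstep j
    linarith
  have hsum_eq : ∑ j, (p j / Real.sqrt (q j) + lam * (q j - q' j))
      = ∑ j, p j / Real.sqrt (q j) := by
    rw [Finset.sum_add_distrib, ← Finset.mul_sum, Finset.sum_sub_distrib, hc, hq'sum]
    simp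
  constructor
  · calc ∑ j, p j / Real.sqrt (q j)
        = ∑ j, (p j / Real.sqrt (q j) + lam * (q j - q' j)) := hsum_eq.symm
      _ ≤ ∑ j, p j / Real.sqrt (q' j) := Finset.sum_le_sum (fun j _ => key j)
  · intro hEq
    by_contra hne
    obtain ⟨j0, hj0⟩ := Function.ne_iff.1 hne
    have hlt : ∑ j, (p j / Real.sqrt (q j) + lam * (q j - q' j))
        < ∑ j, p j / Real.sqrt (q' j) :=
      Finset.sum_lt_sum (fun j _ => key j) ⟨j0, Finset.mem_univ _, keylt j0 hj0⟩
    rw [hsum_eq] at hlt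
    linarith [hEq, hlt]
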